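/- arXiv:0812.2159 — 8 statements merged into one kernel-verified Lean document; each statement's English description precedes it below -/
import Mathlib

section
/- Let (P₁,P₂,P₃,P₄) be nonzero null vectors in ℂ^{n,1}, pairwise linearly independent, with Gram matrix G = (⟨P_i,P_j⟩). Then among the matrices D*·G·D, where D ranges over invertible diagonal complex 4×4 matrices, there is exactly one matrix G' = (g'_{ij}) satisfying g'_{12} = g'_{23} = g'_{34} = 1 and |g'_{13}| = 1. -/
open Complex Matrix
open scoped ComplexConjugate

noncomputable section

/-- The Hermitian form of signature `(n,1)` on `ℂ^{n+1}`:
`⟨Z,W⟩ = Z₁·conj W_{n+1} + Z₂·conj W₂ + ⋯ + Z_n·conj W_n + Z_{n+1}·conj W₁`. -/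
def herm {n : ℕ} (Z W : Fin (n + 1) → ℂ) : ℂ :=
  Z 0 * conj (W (Fin.last n)) + Z (Fin.last n) * conj (W 0) +
    ∑ i ∈ Finset.univ.filter (fun i : Fin (n + 1) => i ≠ 0 ∧ i ≠ Fin.last n),
      Z i * conj (W i)

/-- The Gram matrix of a quadruple of vectors. -/
def gram {n : ℕ} (P : Fin 4 → Fin (n + 1) → ℂ) : Matrix (Fin 4) (Fin 4) ℂ :=
  fun i j => herm (P i) (P j)

/-- A quadruple of nonzero null vectors, pairwise linearly independent. -/
def IsNullQuadruple {n : ℕ} (P : Fin 4 → Fin (n + 1) → ℂ) : Prop :=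
  (∀ i, P i ≠ 0) ∧ (∀ i, herm (P i) (P i) = 0) ∧
    ∀ i j, i ≠ j → LinearIndependent ℂ ![P i, P j]

/-- The Korányi–Reimann complex cross-ratio. -/
def crossRatio {n : ℕ} (P₁ P₂ P₃ P₄ : Fin (n + 1) → ℂ) : ℂ :=
  (herm P₃ P₁ * herm P₄ P₂) / (herm P₄ P₁ * herm P₃ P₂)

/-- Cartan's angular invariant. -/
def cartan {n : ℕ} (P₁ P₂ P₃ : Fin (n + 1) → ℂ) : ℝ :=
  (-(herm P₁ P₂ * herm P₂ P₃ * herm P₃ P₁)).arg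

/-- `G` is the normalized Gram matrix of the quadruple `P`. -/
def IsNormalizedGram {n : ℕ} (P : Fin 4 → Fin (n + 1) → ℂ)
    (G : Matrix (Fin 4) (Fin 4) ℂ) : Prop :=
  (∃ d : Fin 4 → ℂ, (∀ i, d i ≠ 0) ∧
      G = (Matrix.diagonal d)ᴴ * gram P * Matrix.diagonal d) ∧
    G 0 1 = 1 ∧ G 1 2 = 1 ∧ G 2 3 = 1 ∧ ‖G 0 2‖ = 1

/-- Two quadruples are congruent if a linear map preserving the Hermitian form
sends one to the other up to nonzero scalars. -/
def HermCongruent {n : ℕ} (P P' : Fin 4 → Fin (n + 1) → ℂ) : Prop :=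
  ∃ A : (Fin (n + 1) → ℂ) →ₗ[ℂ] (Fin (n + 1) → ℂ),
    (∀ Z W, herm (A Z) (A W) = herm Z W) ∧
    ∃ lam : Fin 4 → ℂ, (∀ i, lam i ≠ 0) ∧ ∀ i, A (P i) = lam i • P' i

lemma herm_conj {n : ℕ} (Z W : Fin (n + 1) → ℂ) : herm W Z = conj (herm Z W) := by
  simp only [herm, map_add, map_sum, _root_.map_mul, Complex.conj_conj]
  simp [mul_comm]
  ring

lemma herm_add_left {n : ℕ} (Z Z' W : Fin (n + 1) → ℂ) :
    herm (Z + Z') W = herm Z W + herm Z' W := by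
  simp only [herm, Pi.add_apply, add_mul, Finset.sum_add_distrib]
  ring

lemma herm_smul_left {n : ℕ} (a : ℂ) (Z W : Fin (n + 1) → ℂ) :
    herm (a • Z) W = a * herm Z W := by
  simp only [herm, Pi.smul_apply, smul_eq_mul, mul_add, Finset.mul_sum]
  ring_nf

lemma herm_sub_left {n : ℕ} (Z Z' W : Fin (n + 1) → ℂ) :
    herm (Z - Z') W = herm Z W - herm Z' W := by
  have h : Z - Z' + Z' = Z := by ext i; simp
  have := herm_add_left (Z - Z') Z' W
  rw [h] at this
  linear_combination -this

lemma herm_smul_right {n : ℕ} (a : ℂ) (Z W : Fin (n + 1) → ℂ) :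
    herm Z (a • W) = conj a * herm Z W := by
  rw [herm_conj (a • W) Z, herm_smul_left, _root_.map_mul, herm_conj Z W, Complex.conj_conj]

lemma herm_sub_right {n : ℕ} (Z W W' : Fin (n + 1) → ℂ) :
    herm Z (W - W') = herm Z W - herm Z W' := by
  rw [herm_conj (W - W') Z, herm_sub_left, map_sub, herm_conj Z W, herm_conj Z W',
    Complex.conj_conj, Complex.conj_conj]

/-- null vector with first coordinate zero has middle coordinates zero -/
lemma null_middle_zero {n : ℕ} {Z : Fin (n + 1) → ℂ} (h : herm Z Z = 0) (h0 : Z 0 = 0)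
    (i : Fin (n + 1)) (hi0 : i ≠ 0) (hil : i ≠ Fin.last n) : Z i = 0 := by
  rw [herm, h0] at h
  simp only [zero_mul, mul_zero, map_zero, zero_add, add_zero] at h
  have h2 : ∑ j ∈ Finset.univ.filter (fun j : Fin (n + 1) => j ≠ 0 ∧ j ≠ Fin.last n),
      Complex.normSq (Z j) = 0 := by
    have := congrArg Complex.re h
    simpa [Complex.mul_conj] using this
  have h3 := (Finset.sum_eq_zero_iff_of_nonneg (fun j _ => Complex.normSq_nonneg (Z j))).mp h2
    i (by simp [hi0, hil])
  exact Complex.normSq_eq_zero.mp h3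

lemma dep_of_first_ne {n : ℕ} {Z W : Fin (n + 1) → ℂ} (hZ0 : Z 0 ≠ 0)
    (hZZ : herm Z Z = 0) (hWW : herm W W = 0) (hZW : herm Z W = 0)
    (hWZ : herm W Z = 0) : W 0 • Z - Z 0 • W = 0 := by
  set R := W 0 • Z - Z 0 • W with hRdef
  have hR0 : R 0 = 0 := by simp [hRdef]; ring
  have hRR : herm R R = 0 := by
    simp [hRdef, herm_sub_left, herm_sub_right, herm_smul_left, herm_smul_right,
      hZZ, hWW, hZW, hWZ]
  have hmid : ∀ i, i ≠ 0 → i ≠ Fin.last n → R i = 0 := null_middle_zero hRR hR0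
  have hZR : herm Z R = 0 := by
    simp [hRdef, herm_sub_right, herm_smul_right, hZZ, hZW]
  have hZR2 : herm Z R = Z 0 * conj (R (Fin.last n)) := by
    rw [herm, hR0]
    rw [Finset.sum_eq_zero (fun i hi => by
      have h2 := Finset.mem_filter.mp hi
      rw [hmid i h2.2.1 h2.2.2]; simp)]
    simp
  have hRl : R (Fin.last n) = 0 := by
    have := hZR2.symm.trans hZR
    rcases mul_eq_zero.mp this with h | h
    · exact absurd h hZ0
    · simpa using congrArg (starRingEnd ℂ) h
  funext i
  rcases eq_or_ne i 0 with rfl | h0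
  · exact hR0
  rcases eq_or_ne i (Fin.last n) with rfl | hL
  · exact hRl
  · exact hmid i h0 hL

lemma herm_ne_zero {n : ℕ} {Z W : Fin (n + 1) → ℂ} (hZ : Z ≠ 0) (hW : W ≠ 0)
    (hZZ : herm Z Z = 0) (hWW : herm W W = 0)
    (hli : LinearIndependent ℂ ![Z, W]) : herm Z W ≠ 0 := by
  intro h
  have hWZ : herm W Z = 0 := by rw [herm_conj, h, map_zero]
  rw [LinearIndependent.pair_iff] at hli
  by_cases hZ0 : Z 0 ≠ 0
  · have hR := dep_of_first_ne hZ0 hZZ hWW h hWZ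
    have := (hli (W 0) (-(Z 0)) (by rw [neg_smul, ← sub_eq_add_neg]; exact hR)).2
    simp at this
    exact hZ0 this
  by_cases hW0 : W 0 ≠ 0
  · have hR := dep_of_first_ne hW0 hWW hZZ hWZ h
    have := (hli (-(W 0)) (Z 0) (by
      rw [neg_smul, neg_add_eq_zero]
      have := hR
      rw [sub_eq_zero] at this
      exact this.symm)).1
    simp at this
    exact hW0 this
  push_neg at hZ0 hW0
  have hZmid := null_middle_zero hZZ hZ0
  have hWmid := null_middle_zero hWW hW0
  have hZl : Z (Fin.last n) ≠ 0 := by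
    intro hl
    apply hZ
    funext i
    rcases eq_or_ne i 0 with rfl | h0
    · exact hZ0
    rcases eq_or_ne i (Fin.last n) with rfl | hL
    · exact hl
    · exact hZmid i h0 hL
  have key : W (Fin.last n) • Z + (-(Z (Fin.last n))) • W = 0 := by
    funext i
    rcases eq_or_ne i 0 with rfl | h0
    · simp [hZ0, hW0]
    rcases eq_or_ne i (Fin.last n) with rfl | hL
    · simp; ring
    · simp [hZmid i h0 hL, hWmid i h0 hL]
  have := (hli _ _ key).2
  rw [neg_eq_zero] at this
  exact hZl this

lemma scale_eq {d e : Fin 4 → ℂ} (hd : ∀ i, d i ≠ 0) (he : ∀ i, e i ≠ 0)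
    (k1 : conj (e 0) * e 1 = conj (d 0) * d 1)
    (k2 : conj (e 1) * e 2 = conj (d 1) * d 2)
    (k3 : conj (e 2) * e 3 = conj (d 2) * d 3)
    (k4 : ‖e 0‖ * ‖e 2‖
      = ‖d 0‖ * ‖d 2‖) :
    ∃ t : ℂ, conj t * t = 1 ∧ ∀ i, e i = t * d i := by
  set t := e 0 / d 0 with htd
  set u1 := e 1 / d 1 with hu1d
  set u2 := e 2 / d 2 with hu2d
  set u3 := e 3 / d 3 with hu3d
  have ht0 : t ≠ 0 := div_ne_zero (he 0) (hd 0)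
  have hct0 : conj t ≠ 0 := by simpa using ht0
  have hq1 : conj t * u1 = 1 := by
    rw [htd, hu1d, map_div₀]
    rw [div_mul_div_comm, k1, div_self (mul_ne_zero (by simpa using hd 0) (hd 1))]
  have hq2 : conj u1 * u2 = 1 := by
    rw [hu1d, hu2d, map_div₀]
    rw [div_mul_div_comm, k2, div_self (mul_ne_zero (by simpa using hd 1) (hd 2))]
  have hq3 : conj u2 * u3 = 1 := by
    rw [hu2d, hu3d, map_div₀]
    rw [div_mul_div_comm, k3, div_self (mul_ne_zero (by simpa using hd 2) (hd 3))]
  have hq4 : ‖t‖ * ‖u2‖ = 1 := by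
    rw [htd, hu2d, norm_div, norm_div, div_mul_div_comm, k4,
      div_self (mul_ne_zero (by simpa using hd 0) (by simpa using hd 2))]
  have hu1 : u1 = (conj t)⁻¹ := by
    have h := congrArg (fun z => (conj t)⁻¹ * z) hq1
    simpa [← mul_assoc, inv_mul_cancel₀ hct0] using h
  have hu2 : u2 = t := by
    rw [hu1, map_inv₀, Complex.conj_conj] at hq2
    have h := congrArg (fun z => t * z) hq2
    simpa [← mul_assoc, mul_inv_cancel₀ ht0] using h
  have habs : conj t * t = 1 := by
    rw [hu2] at hq4
    have hn : Complex.normSq t = 1 := by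
      rw [Complex.normSq_eq_norm_sq]
      nlinarith [norm_nonneg t]
    rw [mul_comm, Complex.mul_conj, hn]
    simp
  have hct : (conj t)⁻¹ = t := inv_eq_of_mul_eq_one_right habs
  have hu1' : u1 = t := by rw [hu1, hct]
  have hu3 : u3 = t := by
    rw [hu2] at hq3
    have h := congrArg (fun z => (conj t)⁻¹ * z) hq3
    simp only [← mul_assoc, inv_mul_cancel₀ hct0, one_mul, mul_one] at h
    rw [h, hct]
  refine ⟨t, habs, fun i => ?_⟩
  fin_cases i
  · show e 0 = t * d 0
    rw [htd, div_mul_cancel₀ _ (hd 0)]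
  · show e 1 = t * d 1
    rw [← hu1', hu1d, div_mul_cancel₀ _ (hd 1)]
  · show e 2 = t * d 2
    rw [← hu2, hu2d, div_mul_cancel₀ _ (hd 2)]
  · show e 3 = t * d 3
    rw [← hu3, hu3d, div_mul_cancel₀ _ (hd 3)]

lemma entry_formula {n : ℕ} (P : Fin 4 → Fin (n + 1) → ℂ) (v : Fin 4 → ℂ) (i j : Fin 4) :
    ((Matrix.diagonal v)ᴴ * gram P * Matrix.diagonal v) i j
      = conj (v i) * gram P i j * v j := by
  rw [Matrix.mul_diagonal, Matrix.diagonal_conjTranspose, Matrix.diagonal_mul]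
  simp [Complex.star_def]

lemma exists_diag (g01 g12 g23 g02 : ℂ) (h01 : g01 ≠ 0) (h12 : g12 ≠ 0)
    (h23 : g23 ≠ 0) (h02 : g02 ≠ 0) :
    ∃ d0 d1 d2 d3 : ℂ, d0 ≠ 0 ∧ d1 ≠ 0 ∧ d2 ≠ 0 ∧ d3 ≠ 0 ∧
      conj d0 * g01 * d1 = 1 ∧ conj d1 * g12 * d2 = 1 ∧ conj d2 * g23 * d3 = 1 ∧
      ‖conj d0 * g02 * d2‖ = 1 := by
  have ha : 0 < ‖g01‖ := norm_pos_iff.mpr h01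
  have hb : 0 < ‖g12‖ := norm_pos_iff.mpr h12
  have hc : 0 < ‖g02‖ := norm_pos_iff.mpr h02
  have hsp : 0 < ‖g12‖ / (‖g01‖ * ‖g02‖) := by positivity
  set s := Real.sqrt (‖g12‖ / (‖g01‖ * ‖g02‖)) with hs_def
  have hs : 0 < s := Real.sqrt_pos.mpr hsp
  have hs2 : s ^ 2 = ‖g12‖ / (‖g01‖ * ‖g02‖) :=
    Real.sq_sqrt hsp.le
  set d0 : ℂ := (s : ℂ) with hd0_def
  have hd0 : d0 ≠ 0 := Complex.ofReal_ne_zero.mpr hs.ne'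
  have hcd0 : conj d0 ≠ 0 := by simpa using hd0
  set d1 : ℂ := (conj d0 * g01)⁻¹ with hd1_def
  have hd1 : d1 ≠ 0 := inv_ne_zero (mul_ne_zero hcd0 h01)
  have hcd1 : conj d1 ≠ 0 := by simpa using hd1
  set d2 : ℂ := (conj d1 * g12)⁻¹ with hd2_def
  have hd2 : d2 ≠ 0 := inv_ne_zero (mul_ne_zero hcd1 h12)
  have hcd2 : conj d2 ≠ 0 := by simpa using hd2
  set d3 : ℂ := (conj d2 * g23)⁻¹ with hd3_def
  have hd3 : d3 ≠ 0 := inv_ne_zero (mul_ne_zero hcd2 h23)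
  have habs0 : ‖d0‖ = s := by
    rw [hd0_def, Complex.norm_real, Real.norm_eq_abs]
    exact abs_of_pos hs
  have habs1 : ‖d1‖ = (s * ‖g01‖)⁻¹ := by
    rw [hd1_def, norm_inv, norm_mul, Complex.norm_conj, habs0]
  have habs2 : ‖d2‖ = s * ‖g01‖ / ‖g12‖ := by
    rw [hd2_def, norm_inv, norm_mul, Complex.norm_conj, habs1]
    field_simp
  refine ⟨d0, d1, d2, d3, hd0, hd1, hd2, hd3, ?_, ?_, ?_, ?_⟩
  · rw [hd1_def]; exact mul_inv_cancel₀ (mul_ne_zero hcd0 h01)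
  · rw [hd2_def]; exact mul_inv_cancel₀ (mul_ne_zero hcd1 h12)
  · rw [hd3_def]; exact mul_inv_cancel₀ (mul_ne_zero hcd2 h23)
  · rw [norm_mul, norm_mul, Complex.norm_conj, habs0, habs2]
    have hs2' : s ^ 2 * (‖g01‖ * ‖g02‖) = ‖g12‖ := by
      rw [hs2]; field_simp
    field_simp
    linear_combination hs2'


/-- existence and uniqueness of the normalized Gram matrix. -/
theorem stmt0 (n : ℕ) (P : Fin 4 → Fin (n + 1) → ℂ) (hP : IsNullQuadruple P) :
    ∃! G' : Matrix (Fin 4) (Fin 4) ℂ,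
      (∃ d : Fin 4 → ℂ, (∀ i, d i ≠ 0) ∧
          G' = (Matrix.diagonal d)ᴴ * gram P * Matrix.diagonal d) ∧
      G' 0 1 = 1 ∧ G' 1 2 = 1 ∧ G' 2 3 = 1 ∧ ‖G' 0 2‖ = 1 := by
  obtain ⟨hPne, hnull, hli⟩ := hP
  have hne : ∀ i j : Fin 4, i ≠ j → gram P i j ≠ 0 := fun i j hij =>
    herm_ne_zero (hPne i) (hPne j) (hnull i) (hnull j) (hli i j hij)
  have h01 : gram P 0 1 ≠ 0 := hne 0 1 (by decide)
  have h12 : gram P 1 2 ≠ 0 := hne 1 2 (by decide)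
  have h23 : gram P 2 3 ≠ 0 := hne 2 3 (by decide)
  have h02 : gram P 0 2 ≠ 0 := hne 0 2 (by decide)
  obtain ⟨d0, d1, d2, d3, hd0, hd1, hd2, hd3, c1, c2, c3, cabs⟩ :=
    exists_diag (gram P 0 1) (gram P 1 2) (gram P 2 3) (gram P 0 2) h01 h12 h23 h02
  set d : Fin 4 → ℂ := ![d0, d1, d2, d3] with hd_def
  have hdi : ∀ i, d i ≠ 0 := by
    intro i; fin_cases i <;> assumption
  have hD0 : d 0 = d0 := rfl
  have hD1 : d 1 = d1 := rfl
  have hD2 : d 2 = d2 := rfl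
  have hD3 : d 3 = d3 := rfl
  refine ⟨(Matrix.diagonal d)ᴴ * gram P * Matrix.diagonal d,
    ⟨⟨d, hdi, rfl⟩, ?_, ?_, ?_, ?_⟩, ?_⟩
  · rw [entry_formula, hD0, hD1]; exact c1
  · rw [entry_formula, hD1, hD2]; exact c2
  · rw [entry_formula, hD2, hD3]; exact c3
  · rw [entry_formula, hD0, hD2]; exact cabs
  · rintro G'' ⟨⟨e, hei, rfl⟩, k01, k12, k23, kabs⟩
    rw [entry_formula] at k01 k12 k23 kabs
    have k1 : conj (e 0) * e 1 = conj (d 0) * d 1 := by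
      apply mul_right_cancel₀ h01
      rw [hD0, hD1]
      linear_combination k01 - c1
    have k2 : conj (e 1) * e 2 = conj (d 1) * d 2 := by
      apply mul_right_cancel₀ h12
      rw [hD1, hD2]
      linear_combination k12 - c2
    have k3 : conj (e 2) * e 3 = conj (d 2) * d 3 := by
      apply mul_right_cancel₀ h23
      rw [hD2, hD3]
      linear_combination k23 - c3
    have k4 : ‖e 0‖ * ‖e 2‖
        = ‖d 0‖ * ‖d 2‖ := by
      rw [norm_mul, norm_mul, Complex.norm_conj] at kabs
      rw [norm_mul, norm_mul, Complex.norm_conj] at cabs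
      apply mul_right_cancel₀ (show ‖gram P 0 2‖ ≠ 0 from
        (norm_pos_iff.mpr h02).ne')
      rw [hD0, hD2]
      linear_combination kabs - cabs
    obtain ⟨t, htt, het⟩ := scale_eq hdi hei k1 k2 k3 k4
    ext i j
    rw [entry_formula, entry_formula, het i, het j, _root_.map_mul]
    linear_combination (conj (d i) * gram P i j * d j) * htt
end
end

section
/- Let (P₁,P₂,P₃,P₄) be nonzero null vectors in ℂ^{n,1}, pairwise linearly independent, with normalized Gram matrix G = (g_{ij}). Then the Cartan angular invariants of the four triples satisfy: 𝔸(p₁,p₂,p₃) = arg(−conj(g₁₃)), 𝔸(p₁,p₂,p₄) = arg(−g₂₄·conj(g₁₄)), 𝔸(p₁,p₃,p₄) = arg(−g₁₃·conj(g₁₄)), and 𝔸(p₂,p₃,p₄) = arg(−conj(g₂₄)). -/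
open Complex Matrix
open scoped ComplexConjugate

noncomputable section

/-- Two quadruples are congruent if a linear map preserving the Hermitian form
sends one to the other up to nonzero scalars. -/
def CongruentQuad {n : ℕ} (P P' : Fin 4 → Fin (n + 1) → ℂ) : Prop :=
  ∃ A : (Fin (n + 1) → ℂ) →ₗ[ℂ] (Fin (n + 1) → ℂ),
    (∀ Z W, herm (A Z) (A W) = herm Z W) ∧
    ∃ lam : Fin 4 → ℂ, (∀ i, lam i ≠ 0) ∧ ∀ i, A (P i) = lam i • P' i


/-- Cartan invariants of the four faces in terms of the
normalized Gram matrix. -/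
theorem stmt3 (n : ℕ) (P : Fin 4 → Fin (n + 1) → ℂ) (hP : IsNullQuadruple P)
    (G : Matrix (Fin 4) (Fin 4) ℂ) (hG : IsNormalizedGram P G) :
    cartan (P 0) (P 1) (P 2) = (-(conj (G 0 2))).arg ∧
    cartan (P 0) (P 1) (P 3) = (-(G 1 3 * conj (G 0 3))).arg ∧
    cartan (P 0) (P 2) (P 3) = (-(G 0 2 * conj (G 0 3))).arg ∧
    cartan (P 1) (P 2) (P 3) = (-(conj (G 1 3))).arg := by
  obtain ⟨⟨d, hd, hGeq⟩, h01, h12, h23, _⟩ := hG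
  have hG' : ∀ i j, G i j = conj (d i) * herm (P i) (P j) * d j := by
    intro i j
    rw [hGeq, Matrix.diagonal_conjTranspose]
    rw [Matrix.mul_diagonal, Matrix.diagonal_mul]
    simp only [Pi.star_apply, _root_.gram, starRingEnd_apply]
  have hH : ∀ i j, G j i = conj (G i j) := by
    intro i j
    rw [hG' i j, hG' j i, herm_conj (P i) (P j)]
    simp only [_root_.map_mul, Complex.conj_conj]
    ring
  have key : ∀ i j k : Fin 4, cartan (P i) (P j) (P k) = (-(G i j * G j k * G k i)).arg := by
    intro i j k
    have h : -(G i j * G j k * G k i)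
        = ((Complex.normSq (d i) * Complex.normSq (d j) * Complex.normSq (d k) : ℝ) : ℂ)
          * (-(herm (P i) (P j) * herm (P j) (P k) * herm (P k) (P i))) := by
      rw [hG' i j, hG' j k, hG' k i]
      push_cast
      rw [← Complex.mul_conj, ← Complex.mul_conj, ← Complex.mul_conj]
      ring
    rw [cartan, h, Complex.arg_real_mul]
    exact mul_pos (mul_pos (Complex.normSq_pos.mpr (hd i)) (Complex.normSq_pos.mpr (hd j)))
      (Complex.normSq_pos.mpr (hd k))
  refine ⟨?_, ?_, ?_, ?_⟩
  · rw [key 0 1 2, h01, h12, hH 0 2]; congr 1; ring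
  · rw [key 0 1 3, h01, hH 0 3]; congr 1; ring
  · rw [key 0 2 3, h23, hH 0 3]; congr 1; ring
  · rw [key 1 2 3, h12, h23, hH 1 3]; congr 1; ring
end
end

section
/- Let (P₁,P₂,P₃,P₄) be nonzero null vectors in ℂ^{n,1}, pairwise linearly independent, with normalized Gram matrix G, and let G(i,j,k) denote the 3×3 principal submatrix of G on rows and columns i,j,k. Then det G(1,2,3) = −2·Re(e^{i𝔸}), det G(1,2,4) = −2·Re(conj(X₁)·e^{i𝔸}/|X₂|²), det G(1,3,4) = −2·Re(conj(X₂)·e^{−i𝔸}/|X₂|²), and det G(2,3,4) = −2·Re(X₁·conj(X₂)·e^{−i𝔸}/|X₂|²), where X₁ = X(p₁,p₂,p₃,p₄), X₂ = X(p₁,p₃,p₂,p₄), 𝔸 = 𝔸(p₁,p₂,p₃). -/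
open Complex Matrix
open scoped ComplexConjugate

noncomputable section

/-- Two quadruples are congruent if a linear map preserving the Hermitian form
sends one to the other up to nonzero scalars. -/
def Congruent' {n : ℕ} (P P' : Fin 4 → Fin (n + 1) → ℂ) : Prop :=
  ∃ A : (Fin (n + 1) → ℂ) →ₗ[ℂ] (Fin (n + 1) → ℂ),
    (∀ Z W, herm (A Z) (A W) = herm Z W) ∧
    ∃ lam : Fin 4 → ℂ, (∀ i, lam i ≠ 0) ∧ ∀ i, A (P i) = lam i • P' i

lemma herm_comb {n : ℕ} (a b : ℂ) (P Q : Fin (n + 1) → ℂ) :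
    herm (a • P + b • Q) (a • P + b • Q) =
      a * conj a * herm P P + a * conj b * herm P Q +
      (b * conj a * herm Q P + b * conj b * herm Q Q) := by
  have h : ∀ i j : Fin (n + 1),
      (a • P + b • Q) i * conj ((a • P + b • Q) j) =
      a * conj a * (P i * conj (P j)) + a * conj b * (P i * conj (Q j)) +
      (b * conj a * (Q i * conj (P j)) + b * conj b * (Q i * conj (Q j))) := by
    intro i j
    simp only [Pi.add_apply, Pi.smul_apply, smul_eq_mul, map_add, _root_.map_mul]
    ring
  simp only [herm, h, Finset.sum_add_distrib, ← Finset.mul_sum]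
  ring

lemma herm_self_zero {n : ℕ} (Z : Fin (n + 1) → ℂ) (h0 : Z 0 = Z (Fin.last n))
    (hz : herm Z Z = 0) : Z = 0 := by
  have e : herm Z Z = ((2 * normSq (Z 0) +
      ∑ i ∈ Finset.univ.filter (fun i : Fin (n + 1) => i ≠ 0 ∧ i ≠ Fin.last n),
        normSq (Z i) : ℝ) : ℂ) := by
    unfold herm
    rw [← h0]
    push_cast
    simp only [Complex.mul_conj]
    ring
  rw [e, Complex.ofReal_eq_zero] at hz
  have hnn : ∀ i ∈ Finset.univ.filter (fun i : Fin (n + 1) => i ≠ 0 ∧ i ≠ Fin.last n),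
      (0:ℝ) ≤ normSq (Z i) := fun i _ => normSq_nonneg _
  have hsum : (0:ℝ) ≤ ∑ i ∈ Finset.univ.filter (fun i : Fin (n + 1) => i ≠ 0 ∧ i ≠ Fin.last n),
      normSq (Z i) := Finset.sum_nonneg hnn
  have h1 : normSq (Z 0) = 0 := by nlinarith [normSq_nonneg (Z 0)]
  have h2 : ∀ i ∈ Finset.univ.filter (fun i : Fin (n + 1) => i ≠ 0 ∧ i ≠ Fin.last n),
      normSq (Z i) = 0 := by
    rw [← Finset.sum_eq_zero_iff_of_nonneg hnn]
    linarith
  funext i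
  by_cases hi0 : i = 0
  · subst hi0; exact normSq_eq_zero.mp h1
  by_cases hil : i = Fin.last n
  · subst hil; rw [← h0]; exact normSq_eq_zero.mp h1
  · exact normSq_eq_zero.mp (h2 i (by simp [hi0, hil]))

lemma herm_ne_zero_s7 {n : ℕ} (P Q : Fin (n + 1) → ℂ) (hP : herm P P = 0)
    (hQ : herm Q Q = 0) (hli : LinearIndependent ℂ ![P, Q]) : herm P Q ≠ 0 := by
  intro h
  have hQP : herm Q P = 0 := by rw [herm_conj, h, map_zero]
  by_cases hb : P 0 = P (Fin.last n)
  · exact (by simpa using hli.ne_zero 0 : P ≠ 0) (herm_self_zero P hb hP)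
  · set a : ℂ := Q 0 - Q (Fin.last n) with ha
    set b : ℂ := -(P 0 - P (Fin.last n)) with hbdef
    have hbne : b ≠ 0 := by
      simp only [hbdef, neg_ne_zero, sub_ne_zero]
      exact hb
    have hZZ : herm (a • P + b • Q) (a • P + b • Q) = 0 := by
      rw [herm_comb, hP, hQ, h, hQP]; ring
    have hZ0 : (a • P + b • Q) 0 = (a • P + b • Q) (Fin.last n) := by
      simp only [Pi.add_apply, Pi.smul_apply, smul_eq_mul, ha, hbdef]
      ring
    have hZ := herm_self_zero _ hZ0 hZZ
    exact hbne ((LinearIndependent.pair_iff.mp hli a b hZ).2)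

/-- determinants of the principal 3×3 submatrices of the
normalized Gram matrix in terms of `X₁, X₂, 𝔸`. -/
theorem stmt7 (n : ℕ) (P : Fin 4 → Fin (n + 1) → ℂ) (hP : IsNullQuadruple P)
    (G : Matrix (Fin 4) (Fin 4) ℂ) (hG : IsNormalizedGram P G)
    (X₁ X₂ : ℂ) (A : ℝ)
    (hX₁ : X₁ = crossRatio (P 0) (P 1) (P 2) (P 3))
    (hX₂ : X₂ = crossRatio (P 0) (P 2) (P 1) (P 3))
    (hA : A = cartan (P 0) (P 1) (P 2)) :
    (G.submatrix (![0, 1, 2] : Fin 3 → Fin 4) (![0, 1, 2] : Fin 3 → Fin 4)).det =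
      ((-2 * (Complex.exp (Complex.I * (A : ℂ))).re : ℝ) : ℂ) ∧
    (G.submatrix (![0, 1, 3] : Fin 3 → Fin 4) (![0, 1, 3] : Fin 3 → Fin 4)).det =
      ((-2 * (conj X₁ * Complex.exp (Complex.I * (A : ℂ))).re / ‖X₂‖ ^ 2 : ℝ) : ℂ) ∧
    (G.submatrix (![0, 2, 3] : Fin 3 → Fin 4) (![0, 2, 3] : Fin 3 → Fin 4)).det =
      ((-2 * (conj X₂ * Complex.exp (-(Complex.I * (A : ℂ)))).re / ‖X₂‖ ^ 2 : ℝ) : ℂ) ∧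
    (G.submatrix (![1, 2, 3] : Fin 3 → Fin 4) (![1, 2, 3] : Fin 3 → Fin 4)).det =
      ((-2 * (X₁ * conj X₂ * Complex.exp (-(Complex.I * (A : ℂ)))).re / ‖X₂‖ ^ 2 : ℝ) : ℂ) := by
  obtain ⟨hne, hnull, hli⟩ := hP
  obtain ⟨⟨d, hd, hGd⟩, h01, h12, h23, h02⟩ := hG
  have hd' : ∀ i, conj (d i) ≠ 0 := fun i => star_ne_zero.mpr (hd i)
  have hGij : ∀ i j, G i j = conj (d i) * herm (P i) (P j) * d j := by
    intro i j
    rw [hGd, Matrix.diagonal_conjTranspose, Matrix.mul_diagonal, Matrix.diagonal_mul]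
    simp [_root_.gram, Pi.star_apply, RCLike.star_def]
  have hg : ∀ i j : Fin 4, i ≠ j → herm (P i) (P j) ≠ 0 :=
    fun i j hij => herm_ne_zero_s7 _ _ (hnull i) (hnull j) (hli i j hij)
  have gval : ∀ i j, herm (P i) (P j) = G i j / (conj (d i) * d j) := by
    intro i j
    rw [hGij]
    field_simp [hd j, hd' i]
  have hsymm : ∀ i j, G j i = conj (G i j) := by
    intro i j
    rw [hGij, hGij, herm_conj]
    simp only [_root_.map_mul, Complex.conj_conj]
    ring
  have hdiag : ∀ i, G i i = 0 := by
    intro i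
    rw [hGij, hnull]
    ring
  set a : ℂ := G 0 2 with hadef
  set b : ℂ := G 0 3 with hbdef
  set c : ℂ := G 1 3 with hcdef
  have hb : b ≠ 0 := by
    rw [hbdef, hGij]
    exact mul_ne_zero (mul_ne_zero (hd' 0) (hg 0 3 (by decide))) (hd 3)
  have hc : c ≠ 0 := by
    rw [hcdef, hGij]
    exact mul_ne_zero (mul_ne_zero (hd' 1) (hg 1 3 (by decide))) (hd 3)
  have hb' : conj b ≠ 0 := star_ne_zero.mpr hb
  have hc' : conj c ≠ 0 := star_ne_zero.mpr hc
  have ha1 : a * conj a = 1 := by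
    rw [Complex.mul_conj, ← Complex.sq_norm, h02]
    norm_num
  have h10 : G 1 0 = 1 := by rw [hsymm, h01, _root_.map_one]
  have h21 : G 2 1 = 1 := by rw [hsymm, h12, _root_.map_one]
  have h32 : G 3 2 = 1 := by rw [hsymm, h23, _root_.map_one]
  have h20 : G 2 0 = conj a := by rw [hsymm]
  have h30 : G 3 0 = conj b := by rw [hsymm]
  have h31 : G 3 1 = conj c := by rw [hsymm]
  -- cross-ratios
  have hX₁' : X₁ = conj a * conj c / conj b := by
    rw [hX₁]
    unfold crossRatio
    rw [gval 2 0, gval 3 1, gval 3 0, gval 2 1, h20, h31, h30, h21]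
    field_simp [hd 0, hd 1, hd' 2, hd' 3, hb']
  have hX₂' : X₂ = 1 / conj b := by
    rw [hX₂]
    unfold crossRatio
    rw [gval 1 0, gval 3 2, gval 3 0, gval 1 2, h10, h32, h30, h12]
    field_simp [hd 0, hd 2, hd' 1, hd' 3, hb']
  -- Cartan invariant
  have e0 : conj (d 0) * d 0 = ((normSq (d 0) : ℝ) : ℂ) := by
    rw [mul_comm, Complex.mul_conj]
  have e1 : conj (d 1) * d 1 = ((normSq (d 1) : ℝ) : ℂ) := by
    rw [mul_comm, Complex.mul_conj]
  have e2 : conj (d 2) * d 2 = ((normSq (d 2) : ℝ) : ℂ) := by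
    rw [mul_comm, Complex.mul_conj]
  have p0 : (0:ℝ) < normSq (d 0) := Complex.normSq_pos.mpr (hd 0)
  have p1 : (0:ℝ) < normSq (d 1) := Complex.normSq_pos.mpr (hd 1)
  have p2 : (0:ℝ) < normSq (d 2) := Complex.normSq_pos.mpr (hd 2)
  have key : -(herm (P 0) (P 1) * herm (P 1) (P 2) * herm (P 2) (P 0)) =
      (((normSq (d 0) * normSq (d 1) * normSq (d 2))⁻¹ : ℝ) : ℂ) * (-conj a) := by
    rw [gval 0 1, gval 1 2, gval 2 0, h01, h12, h20]
    rw [div_mul_div_comm, div_mul_div_comm, one_mul, one_mul]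
    rw [show conj (d 0) * d 1 * (conj (d 1) * d 2) * (conj (d 2) * d 0) =
        conj (d 0) * d 0 * (conj (d 1) * d 1) * (conj (d 2) * d 2) from by ring,
      e0, e1, e2]
    push_cast
    ring
  have ht : (0:ℝ) < (normSq (d 0) * normSq (d 1) * normSq (d 2))⁻¹ := by positivity
  have hAa : A = (-conj a).arg := by
    rw [hA]
    unfold cartan
    rw [key, Complex.arg_real_mul _ ht]
  have habs : ‖-conj a‖ = 1 := by
    rw [norm_neg, Complex.norm_conj, h02]
  have hE : Complex.exp (Complex.I * (A : ℂ)) = -conj a := by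
    rw [mul_comm, hAa]
    have h := Complex.norm_mul_exp_arg_mul_I (-conj a)
    rwa [habs, Complex.ofReal_one, one_mul] at h
  have hE' : Complex.exp (-(Complex.I * (A : ℂ))) = -a := by
    rw [Complex.exp_neg, hE, inv_neg,
      inv_eq_of_mul_eq_one_right (by rw [mul_comm]; exact ha1)]
  -- cast helpers
  have cast0 : ∀ w : ℂ, ((-2 * w.re : ℝ) : ℂ) = -(w + conj w) := by
    intro w
    rw [Complex.add_conj]
    push_cast
    ring
  have cast_re : ∀ (w : ℂ) (r : ℝ), ((-2 * w.re / r : ℝ) : ℂ) = -(w + conj w) / (r : ℂ) := by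
    intro w r
    rw [Complex.add_conj]
    push_cast
    ring
  have hXc : ((‖X₂‖ ^ 2 : ℝ) : ℂ) = (b * conj b)⁻¹ := by
    have h1 : ‖X₂‖ ^ 2 = (normSq b)⁻¹ := by
      rw [hX₂', norm_div, Complex.norm_conj, norm_one, div_pow, one_pow,
        one_div, Complex.sq_norm]
    rw [h1, Complex.ofReal_inv, ← Complex.mul_conj]
  -- determinants
  have hdet1 : (G.submatrix (![0, 1, 2] : Fin 3 → Fin 4) (![0, 1, 2] : Fin 3 → Fin 4)).det
      = a + conj a := by
    rw [Matrix.det_fin_three]; simp [hdiag, h01, h12, h10, h21, h20, ← hadef] <;> ring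
  have hdet2 : (G.submatrix (![0, 1, 3] : Fin 3 → Fin 4) (![0, 1, 3] : Fin 3 → Fin 4)).det
      = b * conj c + c * conj b := by
    rw [Matrix.det_fin_three]; simp [hdiag, h01, h10, h30, h31, ← hbdef, ← hcdef] <;> ring
  have hdet3 : (G.submatrix (![0, 2, 3] : Fin 3 → Fin 4) (![0, 2, 3] : Fin 3 → Fin 4)).det
      = a * conj b + b * conj a := by
    rw [Matrix.det_fin_three]; simp [hdiag, h23, h32, h20, h30, ← hadef, ← hbdef] <;> ring
  have hdet4 : (G.submatrix (![1, 2, 3] : Fin 3 → Fin 4) (![1, 2, 3] : Fin 3 → Fin 4)).det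
      = c + conj c := by
    rw [Matrix.det_fin_three]; simp [hdiag, h12, h21, h23, h32, h31, ← hcdef] <;> ring
  refine ⟨?_, ?_, ?_, ?_⟩
  · rw [hdet1, hE, cast0]
    simp only [map_neg, Complex.conj_conj]
    ring
  · have k2 : conj X₁ * Complex.exp (Complex.I * (A : ℂ)) = -(c / b) := by
      rw [hX₁', hE, map_div₀, _root_.map_mul]
      simp only [Complex.conj_conj]
      linear_combination (-(c / b)) * ha1
    rw [hdet2, cast_re, hXc, k2]
    simp only [map_neg, map_div₀]
    field_simp
    ring
  · have k3 : conj X₂ * Complex.exp (-(Complex.I * (A : ℂ))) = -(a / b) := by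
      rw [hX₂', hE', map_div₀, _root_.map_one]
      simp only [Complex.conj_conj]
      field_simp
    rw [hdet3, cast_re, hXc, k3]
    simp only [map_neg, map_div₀]
    field_simp
    ring
  · have k4 : X₁ * conj X₂ * Complex.exp (-(Complex.I * (A : ℂ))) = -(conj c / (b * conj b)) := by
      rw [hX₁', hX₂', hE', map_div₀, _root_.map_one]
      simp only [Complex.conj_conj]
      linear_combination (-((starRingEnd ℂ) c) / (b * (starRingEnd ℂ) b)) * ha1
    rw [hdet4, cast_re, hXc, k4]
    simp only [map_neg, map_div₀, _root_.map_mul, Complex.conj_conj]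
    field_simp
    ring
end
end

section
/- Let F(a,b,c,d,A) = −2(a+c) − 2[(ac+bd)·cos 2A + (bc−ad)·sin 2A] + a² + b² + c² + d² + 1 as a function on ℝ⁵. If F(a,b,c,d,A) = 0 at a point with (a,b) ≠ (0,0), (c,d) ≠ (0,0), and −π/2 < A < π/2, then the gradient of F at that point is nonzero, i.e. at least one of the five partial derivatives ∂F/∂a = −1 − c·cos 2A + d·sin 2A + a, ∂F/∂c = −1 − a·cos 2A − b·sin 2A + c, ∂F/∂b = −d·cos 2A − c·sin 2A + b, ∂F/∂d = −b·cos 2A + a·sin 2A + d, ∂F/∂A = 2[(ac+bd)·sin 2A − (bc−ad)·cos 2A] does not vanish there. -/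
open Complex Matrix
open scoped ComplexConjugate

noncomputable section

/-- The defining function of the basic variety `𝕊`. -/
def Fb (a b c d A : ℝ) : ℝ :=
  -2 * (a + c)
    - 2 * ((a * c + b * d) * Real.cos (2 * A) + (b * c - a * d) * Real.sin (2 * A))
    + a ^ 2 + b ^ 2 + c ^ 2 + d ^ 2 + 1

/-- the basic variety has no singular points with
`X₁ ≠ 0`, `X₂ ≠ 0` and `-π/2 < A < π/2`. -/
theorem stmt11 (a b c d A : ℝ) (h : Fb a b c d A = 0)
    (h1 : (a, b) ≠ (0, 0)) (h2 : (c, d) ≠ (0, 0))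
    (hA₁ : -(Real.pi / 2) < A) (hA₂ : A < Real.pi / 2) :
    ¬ ((-1 - c * Real.cos (2 * A) + d * Real.sin (2 * A) + a = 0) ∧
       (-1 - a * Real.cos (2 * A) - b * Real.sin (2 * A) + c = 0) ∧
       (-d * Real.cos (2 * A) - c * Real.sin (2 * A) + b = 0) ∧
       (-b * Real.cos (2 * A) + a * Real.sin (2 * A) + d = 0) ∧
       (2 * ((a * c + b * d) * Real.sin (2 * A) - (b * c - a * d) * Real.cos (2 * A)) = 0)) := by
  rintro ⟨e1, e2, _, e4, _⟩
  have hcA : 0 < Real.cos A :=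
    Real.cos_pos_of_mem_Ioo ⟨hA₁, hA₂⟩
  have hC : -1 < Real.cos (2 * A) := by
    have := Real.cos_two_mul A
    nlinarith
  have hpy := Real.sin_sq_add_cos_sq (2 * A)
  have : Real.cos (2 * A) = -1 := by
    linear_combination -e1 - Real.cos (2 * A) * e2 + Real.sin (2 * A) * e4 - a * hpy
  linarith
end
end

section
/- Let F(a,b,c,d,A) = −2(a+c) − 2[(ac+bd)·cos 2A + (bc−ad)·sin 2A] + a² + b² + c² + d² + 1, and suppose A satisfies cos A ≠ 0 (i.e. A ≠ ±π/2 + 2kπ). Then a point (a,b,c,d,A) satisfies both F(a,b,c,d,A) = 0 and a·cos A + b·sin A = 0 (the Cartan variety condition Re(conj(X₁)·e^{iA}) = 0) if and only if a + b·tan A = 0, a + c = 1, and b − d = 0. -/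
open Complex Matrix
open scoped ComplexConjugate

noncomputable section

/-- intersection of the basic variety with the Cartan variety
`𝕊₁₂₄` away from `A = ±π/2 + 2kπ`. -/
theorem stmt13 (a b c d A : ℝ) (hcos : Real.cos A ≠ 0) :
    (Fb a b c d A = 0 ∧ a * Real.cos A + b * Real.sin A = 0) ↔
      (a + b * Real.tan A = 0 ∧ a + c = 1 ∧ b - d = 0) := by
  have hs := Real.sin_sq_add_cos_sq A
  have hid : ∀ h2 : a * Real.cos A + b * Real.sin A = 0,
      Fb a b c d A = (a + c - 1) ^ 2 + (b - d) ^ 2 := by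
    intro h2
    unfold Fb
    rw [Real.cos_two_mul, Real.sin_two_mul]
    linear_combination (-4*b*d)*hs + (-4*(c*Real.cos A - d*Real.sin A))*h2
  have htan : (a + b * Real.tan A = 0) ↔ (a * Real.cos A + b * Real.sin A = 0) := by
    rw [Real.tan_eq_sin_div_cos]
    constructor
    · intro h
      have := mul_eq_zero_of_left h (Real.cos A)
      field_simp at this ⊢
      linarith
    · intro h
      field_simp
      linarith
  constructor
  · rintro ⟨h1, h2⟩
    rw [hid h2] at h1
    refine ⟨htan.mpr h2, ?_, ?_⟩ <;> nlinarith [sq_nonneg (a + c - 1), sq_nonneg (b - d)]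
  · rintro ⟨h1, h2, h3⟩
    have h2' := htan.mp h1
    refine ⟨?_, h2'⟩
    rw [hid h2', h2, h3]; ring
end
end

section
/- Let a, c, A be real numbers with −π/2 ≤ A ≤ π/2 satisfying −2(a+c) − 2ac·cos 2A + a² + c² + 1 = 0. Then a·cos A ≥ 0. (Equivalently: any point (X₁,X₂,A) of the basic variety with X₁, X₂ real and −π/2 ≤ A ≤ π/2 satisfies Re(X₁·e^{−iA}) ≥ 0.) -/
open Complex Matrix
open scoped ComplexConjugate

noncomputable section

/-- Two quadruples are congruent if a linear map preserving the Hermitian form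
sends one to the other up to nonzero scalars. -/
def QuadCongruent {n : ℕ} (P P' : Fin 4 → Fin (n + 1) → ℂ) : Prop :=
  ∃ A : (Fin (n + 1) → ℂ) →ₗ[ℂ] (Fin (n + 1) → ℂ),
    (∀ Z W, herm (A Z) (A W) = herm Z W) ∧
    ∃ lam : Fin 4 → ℂ, (∀ i, lam i ≠ 0) ∧ ∀ i, A (P i) = lam i • P' i

/-- the real slice of the basic variety satisfies
`Re (X₁ e^{-iA}) ≥ 0`. -/
theorem stmt16 (a c A : ℝ) (hA₁ : -(Real.pi / 2) ≤ A) (hA₂ : A ≤ Real.pi / 2)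
    (h : -2 * (a + c) - 2 * a * c * Real.cos (2 * A) + a ^ 2 + c ^ 2 + 1 = 0) :
    0 ≤ a * Real.cos A := by
  have hc : 0 ≤ Real.cos A := Real.cos_nonneg_of_mem_Icc ⟨hA₁, hA₂⟩
  have h2 : Real.cos (2 * A) = 2 * Real.cos A ^ 2 - 1 := Real.cos_two_mul A
  rw [h2] at h
  rcases eq_or_lt_of_le hc with hc0 | hc0
  · simp [← hc0]
  · rcases le_or_gt 0 a with ha | ha
    · exact mul_nonneg ha hc
    · exfalso
      -- (a+c-1)^2 = 4ac cos²A forces c ≤ 0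
      have hac : 0 ≤ a * c := by nlinarith [sq_nonneg (a + c - 1), mul_pos hc0 hc0]
      have hcle : c ≤ 0 := nonpos_of_mul_nonneg_right (by nlinarith) ha
      have hs : Real.sin A ^ 2 = 1 - Real.cos A ^ 2 := by
        nlinarith [Real.sin_sq_add_cos_sq A]
      nlinarith [sq_nonneg (a - c), mul_nonneg hac (sq_nonneg (Real.sin A)), hs, Real.cos_sq_le_one A]
end
end

section
/- Let a, b, c, d, A be real numbers with −π/2 < A < π/2 satisfying F(a,b,c,d,A) = −2(a+c) − 2[(ac+bd)·cos 2A + (bc−ad)·sin 2A] + a² + b² + c² + d² + 1 = 0. Then a·cos A + b·sin A ≥ 0. (Equivalently: any point (X₁,X₂,A) of the basic variety with −π/2 < A < π/2 satisfies Re(X₁·e^{−iA}) ≥ 0.) -/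
open Complex Matrix
open scoped ComplexConjugate

noncomputable section

/-- any point of the basic variety with `-π/2 < A < π/2`
satisfies `Re (X₁ e^{-iA}) ≥ 0`. -/
theorem stmt17 (a b c d A : ℝ) (hA₁ : -(Real.pi / 2) < A) (hA₂ : A < Real.pi / 2)
    (h : Fb a b c d A = 0) :
    0 ≤ a * Real.cos A + b * Real.sin A := by
  by_contra hlt
  push_neg at hlt
  set ca := Real.cos A with hca
  set sa := Real.sin A with hsa
  have hc : 0 < ca := Real.cos_pos_of_mem_Ioo ⟨hA₁, hA₂⟩
  have h1 : sa ^ 2 + ca ^ 2 = 1 := Real.sin_sq_add_cos_sq A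
  have h2 : Real.cos (2 * A) = ca ^ 2 - sa ^ 2 := by
    rw [Real.cos_two_mul]; nlinarith [h1]
  have h3 : Real.sin (2 * A) = 2 * sa * ca := Real.sin_two_mul A
  unfold Fb at h
  rw [h2, h3] at h
  set u := a * ca + b * sa with hu
  set p := c * ca - d * sa with hp
  set v := -a * sa + b * ca with hv
  set q := c * sa + d * ca with hq
  have heq : (u - p) ^ 2 + (v - q + sa) ^ 2 + ca ^ 2 = 2 * ca * (u + p) := by
    linear_combination h + (a ^ 2 + b ^ 2 + c ^ 2 + d ^ 2 - 2 * (a + c) + 1) * h1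
  have hs : 0 < u + p := by
    nlinarith [sq_nonneg (u - p), sq_nonneg (v - q + sa)]
  have hpp : 0 < p := by linarith
  nlinarith [heq, sq_nonneg (u + p - ca), sq_nonneg (v - q + sa),
    mul_pos (neg_pos.mpr hlt) hpp]
end
end

section
/- For real t > 0, t ≠ 1, consider in ℂ^{2,1} the null vectors P₁ = (0,0,1), P₂ = (1,0,0), P₃ = (i,0,1), P₄ = (it,0,1) and P*₁ = (0,0,1), P*₂ = (1,0,0), P*₃ = (−i,0,1), P*₄ = (−it,0,1). Then the two quadruples have equal Korányi–Reimann cross-ratios: X(p₁,p₂,p₃,p₄) = X(p*₁,p*₂,p*₃,p*₄) = 1/t, X(p₁,p₃,p₂,p₄) = X(p*₁,p*₃,p*₂,p*₄) = (t−1)/t, X(p₂,p₃,p₁,p₄) = X(p*₂,p*₃,p*₁,p*₄) = 1−t; but their Cartan invariants differ: 𝔸(p₁,p₂,p₃) = −π/2 while 𝔸(p*₁,p*₂,p*₃) = π/2. Consequently there is no ℂ-linear map A: ℂ³ → ℂ³ preserving the Hermitian form together with nonzero scalars λ_i such that A·P_i = λ_i·P*_i for i = 1,2,3,4. -/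
open Complex Matrix
open scoped ComplexConjugate

noncomputable section

lemma herm3 (Z W : Fin 3 → ℂ) :
    herm Z W = Z 0 * conj (W 2) + Z 2 * conj (W 0) + Z 1 * conj (W 1) := by
  have h : (Finset.univ.filter (fun i : Fin 3 => i ≠ 0 ∧ i ≠ Fin.last 2)) = {1} := by decide
  unfold herm
  rw [h, Finset.sum_singleton]
  norm_num [show (Fin.last 2) = 2 from rfl]

lemma herm_smul (a b : ℂ) (Z W : Fin 3 → ℂ) :
    herm (a • Z) (b • W) = a * conj b * herm Z W := by
  simp only [herm3, Pi.smul_apply, smul_eq_mul, _root_.map_mul]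
  ring

/-- an explicit 1-parameter family of pairs of non-congruent
quadruples with equal cross-ratios. -/
theorem stmt19 (t : ℝ) (ht : 0 < t) (ht1 : t ≠ 1)
    (P Q : Fin 4 → Fin 3 → ℂ)
    (hP : P = ![![0, 0, 1], ![1, 0, 0], ![Complex.I, 0, 1], ![Complex.I * (t : ℂ), 0, 1]])
    (hQ : Q = ![![0, 0, 1], ![1, 0, 0], ![-Complex.I, 0, 1], ![-(Complex.I * (t : ℂ)), 0, 1]]) :
    crossRatio (P 0) (P 1) (P 2) (P 3) = 1 / (t : ℂ) ∧
    crossRatio (Q 0) (Q 1) (Q 2) (Q 3) = 1 / (t : ℂ) ∧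
    crossRatio (P 0) (P 2) (P 1) (P 3) = ((t : ℂ) - 1) / (t : ℂ) ∧
    crossRatio (Q 0) (Q 2) (Q 1) (Q 3) = ((t : ℂ) - 1) / (t : ℂ) ∧
    crossRatio (P 1) (P 2) (P 0) (P 3) = 1 - (t : ℂ) ∧
    crossRatio (Q 1) (Q 2) (Q 0) (Q 3) = 1 - (t : ℂ) ∧
    cartan (P 0) (P 1) (P 2) = -(Real.pi / 2) ∧
    cartan (Q 0) (Q 1) (Q 2) = Real.pi / 2 ∧
    ¬ CongruentQuad P Q := by
  have htC : (t : ℂ) ≠ 0 := by exact_mod_cast ht.ne'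
  have hIt : Complex.I * (t : ℂ) ≠ 0 := mul_ne_zero Complex.I_ne_zero htC
  refine ⟨?_, ?_, ?_, ?_, ?_, ?_, ?_, ?_, ?_⟩
  · subst hP; simp [crossRatio, herm3]; field_simp
  · subst hQ; simp [crossRatio, herm3]; field_simp
  · subst hP; simp [crossRatio, herm3]; field_simp; ring
  · subst hQ; simp [crossRatio, herm3]; field_simp; ring
  · subst hP; simp [crossRatio, herm3]
    rw [div_eq_iff (neg_ne_zero.mpr Complex.I_ne_zero)]; ring
  · subst hQ; simp [crossRatio, herm3]
    linear_combination ((t : ℂ) - 1) * Complex.I_sq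
  · subst hP; simp [cartan, herm3, Complex.arg_neg_I]
  · subst hQ; simp [cartan, herm3, Complex.arg_I]
  · rintro ⟨A, hA, lam, hne, hAP⟩
    have e : ∀ i j, herm (P i) (P j) = lam i * conj (lam j) * herm (Q i) (Q j) := by
      intro i j
      rw [← hA, hAP i, hAP j, herm_smul]
    have e01 := e 0 1
    have e12 := e 1 2
    have e20 := e 2 0
    subst hP hQ
    simp [herm3] at e01 e12 e20
    have h3 : lam 2 * conj (lam 0) = -1 := by
      linear_combination (-Complex.I) * e20 + (1 + lam 2 * conj (lam 0)) * Complex.I_sq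
    have key : ((Complex.normSq (lam 0) * Complex.normSq (lam 1) * Complex.normSq (lam 2) : ℝ) : ℂ) = -1 := by
      push_cast
      rw [← Complex.mul_conj, ← Complex.mul_conj, ← Complex.mul_conj]
      linear_combination (lam 1 * conj (lam 2) * (lam 2 * conj (lam 0))) * e01.symm
        + (lam 2 * conj (lam 0)) * e12.symm + h3
    have key' : (Complex.normSq (lam 0) * Complex.normSq (lam 1) * Complex.normSq (lam 2) : ℝ) = -1 := by
      exact_mod_cast key
    have hnn := mul_nonneg (mul_nonneg (Complex.normSq_nonneg (lam 0)) (Complex.normSq_nonneg (lam 1))) (Complex.normSq_nonneg (lam 2))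
    linarith
end
end
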